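/- Let T = ([x_i],[f_i])_{1≤i≤4} be a generic tetrahedron of flags in CP² with edge coordinates z_{ij} and face coordinates z_{ijk}. Then for each even permutation (i,j,k,l) of (1,2,3,4), z_{ijk} = - z_{il} z_{jl} z_{kl}. -/

import Mathlib

/-- Pairing of a covector and a vector in `ℂ³`. -/
noncomputable def dot (f x : Fin 3 → ℂ) : ℂ := ∑ t, f t * x t

/-- Determinant of three vectors of `ℂ³` (as rows). -/
noncomputable def det3 (a b c : Fin 3 → ℂ) : ℂ := Matrix.det (Matrix.of ![a, b, c])

/-- A generic tetrahedron of flags in `ℂP²`: four points `[xᵢ]` and four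
lines `[fᵢ]` with `fᵢ(xᵢ) = 0`, `fᵢ(xⱼ) ≠ 0` for `i ≠ j`, and no three of
the points collinear. -/
structure FlagTetra where
  x : Fin 4 → Fin 3 → ℂ
  f : Fin 4 → Fin 3 → ℂ
  flag : ∀ i, dot (f i) (x i) = 0
  generic_pairing : ∀ i j, i ≠ j → dot (f i) (x j) ≠ 0
  generic_pts : ∀ i j k : Fin 4, i ≠ j → j ≠ k → i ≠ k → det3 (x i) (x j) (x k) ≠ 0

/-- A very generic tetrahedron of flags: in addition no three of the
lines `[fᵢ]` are concurrent. -/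
structure VGTetra extends FlagTetra where
  generic_lines : ∀ i j k : Fin 4, i ≠ j → j ≠ k → i ≠ k → det3 (f i) (f j) (f k) ≠ 0

/-- The edge coordinate `z_{ij}(T)`, computed with respect to an even
permutation `(i,j,k,l)` of the vertices:
`z_{ij} = (fᵢ(x_k)·det(xᵢ,xⱼ,x_l)) / (fᵢ(x_l)·det(xᵢ,xⱼ,x_k))`. -/
noncomputable def zEdge (T : FlagTetra) (i j k l : Fin 4) : ℂ :=
  (dot (T.f i) (T.x k) * det3 (T.x i) (T.x j) (T.x l)) /
    (dot (T.f i) (T.x l) * det3 (T.x i) (T.x j) (T.x k))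

/-- The face coordinate (triple ratio) `z_{ijk}(T)`. -/
noncomputable def zFace (T : FlagTetra) (i j k : Fin 4) : ℂ :=
  (dot (T.f i) (T.x j) * dot (T.f j) (T.x k) * dot (T.f k) (T.x i)) /
    (dot (T.f i) (T.x k) * dot (T.f j) (T.x i) * dot (T.f k) (T.x j))

/-- The edge coordinate `z*_{ij}` of the dual tetrahedron `T*`, obtained by
replacing each flag `([x],[f])` by `([f],[x])` in the dual projective plane. -/
noncomputable def zEdgeDual (T : FlagTetra) (i j k l : Fin 4) : ℂ :=
  (dot (T.f k) (T.x i) * det3 (T.f i) (T.f j) (T.f l)) /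
    (dot (T.f l) (T.x i) * det3 (T.f i) (T.f j) (T.f k))

/-- Antisymmetry of `det3` in the first and third arguments. -/
lemma det3_swap13 (a b c : Fin 3 → ℂ) : det3 a b c = -det3 c b a := by
  simp [det3, Matrix.det_fin_three]; ring

/-- The face coordinate is the opposite of the product of the edge coordinates
leaving the face: for each even permutation `(i,j,k,l)` of the vertices,
`z_{ijk} = - z_{il} z_{jl} z_{kl}`. -/
theorem zFace_eq_neg_prod_zEdge (T : FlagTetra) (σ : Equiv.Perm (Fin 4))
    (hσ : σ.sign = 1) :
    zFace T (σ 0) (σ 1) (σ 2) =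
      -(zEdge T (σ 0) (σ 3) (σ 1) (σ 2) * zEdge T (σ 1) (σ 3) (σ 2) (σ 0) *
        zEdge T (σ 2) (σ 3) (σ 0) (σ 1)) := by
  set a := σ 0; set b := σ 1; set c := σ 2; set d := σ 3
  have hab : a ≠ b := σ.injective.ne (by decide)
  have hac : a ≠ c := σ.injective.ne (by decide)
  have had : a ≠ d := σ.injective.ne (by decide)
  have hbc : b ≠ c := σ.injective.ne (by decide)
  have hbd : b ≠ d := σ.injective.ne (by decide)
  have hcd : c ≠ d := σ.injective.ne (by decide)
  have h1 : dot (T.f a) (T.x c) ≠ 0 := T.generic_pairing _ _ hac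
  have h2 : dot (T.f b) (T.x a) ≠ 0 := T.generic_pairing _ _ hab.symm
  have h3 : dot (T.f c) (T.x b) ≠ 0 := T.generic_pairing _ _ hbc.symm
  have h4 : det3 (T.x a) (T.x d) (T.x b) ≠ 0 :=
    T.generic_pts _ _ _ had hbd.symm hab
  have h5 : det3 (T.x b) (T.x d) (T.x c) ≠ 0 :=
    T.generic_pts _ _ _ hbd hcd.symm hbc
  have h6 : det3 (T.x c) (T.x d) (T.x a) ≠ 0 :=
    T.generic_pts _ _ _ hcd had.symm hac.symm
  rw [zFace, zEdge, zEdge, zEdge,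
    det3_swap13 (T.x a) (T.x d) (T.x c),
    det3_swap13 (T.x b) (T.x d) (T.x a),
    det3_swap13 (T.x c) (T.x d) (T.x b)]
  field_simp
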